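/- Let G be a finite group, g ∈ G of order n, and k, m positive integers with k^m ≡ 1 (mod n). The Bass unit u_k,m(g) has finite multiplicative order in ℤG if and only if k ≡ ±1 (mod n). -/

import Mathlib

/-- The Bass unit `u_{k,m}(g)` in the integral group ring `ℤG`, with `n = |g|`. -/
noncomputable def bassElem {G : Type*} [Group G] (g : G) (k m : ℕ) :
    MonoidAlgebra ℤ G :=
  (∑ i ∈ Finset.range k, MonoidAlgebra.of ℤ G (g ^ i)) ^ m +
    ((1 - (k : ℤ) ^ m) / (orderOf g : ℤ)) •
      ∑ i ∈ Finset.range (orderOf g), MonoidAlgebra.of ℤ G (g ^ i)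


lemma sq_abs_exp_sub_one (x : ℝ) :
    ‖Complex.exp (x * Complex.I) - 1‖ ^ 2 = 2 - 2 * Real.cos x := by
  rw [Complex.sq_norm, Complex.normSq_apply]
  simp only [Complex.exp_ofReal_mul_I_re, Complex.exp_ofReal_mul_I_im, Complex.sub_re,
    Complex.sub_im, Complex.one_re, Complex.one_im]
  nlinarith [Real.sin_sq_add_cos_sq x]

lemma abs_eq_one_of_pow {a : ℝ} (h0 : 0 ≤ a) {t : ℕ} (ht : t ≠ 0) (h : a ^ t = 1) : a = 1 := by
  rcases lt_trichotomy a 1 with hl | he | hg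
  · exact absurd h (by nlinarith [pow_lt_one₀ h0 hl ht])
  · exact he
  · exact absurd h (by nlinarith [one_lt_pow₀ hg ht])

lemma zeta_pow_n (n : ℕ) (hn : 2 ≤ n) :
    Complex.exp (((2 * Real.pi / n : ℝ) : ℂ) * Complex.I) ^ n = 1 := by
  rw [← Complex.exp_nat_mul]
  have hnC : (n : ℂ) ≠ 0 := Nat.cast_ne_zero.2 (by omega)
  have : (n : ℂ) * (((2 * Real.pi / n : ℝ) : ℂ) * Complex.I)
      = (2 * Real.pi : ℝ) * Complex.I := by
    push_cast
    field_simp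
  rw [this]
  simpa using Complex.exp_two_pi_mul_I

lemma zeta_ne_one (n : ℕ) (hn : 2 ≤ n) :
    Complex.exp (((2 * Real.pi / n : ℝ) : ℂ) * Complex.I) ≠ 1 := by
  intro h
  rw [Complex.exp_eq_one_iff] at h
  obtain ⟨t, ht⟩ := h
  have h2C : ((2 * Real.pi / n : ℝ) : ℂ) = (t : ℂ) * (2 * Real.pi) :=
    mul_right_cancel₀ Complex.I_ne_zero (by rw [ht]; ring)
  have h2 : (2 * Real.pi / n : ℝ) = (t : ℝ) * (2 * Real.pi) := by exact_mod_cast h2C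
  have hn0 : (n : ℝ) ≠ 0 := by positivity
  rw [div_eq_iff hn0] at h2
  have h3 : 2 * Real.pi * (1 : ℝ) = 2 * Real.pi * ((t : ℝ) * n) := by linear_combination h2
  have h4 : (1 : ℝ) = (t : ℝ) * n :=
    mul_left_cancel₀ (by positivity : (2 * Real.pi : ℝ) ≠ 0) h3
  have h5 : (1 : ℤ) = t * n := by exact_mod_cast h4
  have : (n : ℤ) ∣ 1 := Dvd.intro t (by linarith)
  have := Int.le_of_dvd one_pos this
  omega

open Finset

lemma pow_mod_eq {M : Type*} [Monoid M] (a : M) {n : ℕ} (ha : a ^ n = 1) (s : ℕ) :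
    a ^ (s % n) = a ^ s := by
  conv_rhs => rw [← Nat.mod_add_div s n, pow_add, pow_mul, ha, one_pow, mul_one]

def zmodHom {M : Type*} [Monoid M] (a : M) (n : ℕ) [NeZero n] (ha : a ^ n = 1) :
    Multiplicative (ZMod n) →* M where
  toFun x := a ^ (x.toAdd.val)
  map_one' := by simp [ZMod.val_zero]
  map_mul' x y := by
    show a ^ ((x.toAdd + y.toAdd).val) = _
    rw [ZMod.val_add, pow_mod_eq a ha, pow_add]

lemma zmodHom_pow {M : Type*} [Monoid M] (a : M) (n : ℕ) [NeZero n] (ha : a ^ n = 1) (i : ℕ) :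
    zmodHom a n ha (Multiplicative.ofAdd (1 : ZMod n) ^ i) = a ^ i := by
  show a ^ (ZMod.val (((Multiplicative.ofAdd (1 : ZMod n)) ^ i).toAdd)) = a ^ i
  have : ((Multiplicative.ofAdd (1 : ZMod n)) ^ i).toAdd = (i : ZMod n) := by
    simp
  rw [this, ZMod.val_natCast, pow_mod_eq a ha]

lemma zmodHom_injective {M : Type*} [LeftCancelMonoid M] (a : M) [NeZero (orderOf a)]
    (ha : a ^ (orderOf a) = 1) : Function.Injective (zmodHom a (orderOf a) ha) := by
  intro x y hxy
  have := pow_injOn_Iio_orderOf (x := a) (ZMod.val_lt x.toAdd) (ZMod.val_lt y.toAdd) hxy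
  exact Multiplicative.toAdd.injective (ZMod.val_injective _ this)

open Finset MonoidAlgebra

variable {n : ℕ}

noncomputable def sigmaElem (n : ℕ) : MonoidAlgebra ℤ (Multiplicative (ZMod n)) :=
  ∑ i ∈ range n, of ℤ _ (Multiplicative.ofAdd (1 : ZMod n) ^ i)

lemma sigmaElem_eq_univ [NeZero n] :
    sigmaElem n = ∑ x : Multiplicative (ZMod n), of ℤ _ x := by
  refine Finset.sum_nbij' (fun i => Multiplicative.ofAdd ((i : ZMod n)))
    (fun x => x.toAdd.val) ?_ ?_ ?_ ?_ ?_
  · intros; exact mem_univ _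
  · intro x _; exact mem_range.2 (ZMod.val_lt _)
  · intro i hi
    simp only [toAdd_ofAdd, ZMod.val_natCast]
    exact (Nat.mod_eq_of_lt (mem_range.1 hi))
  · intro x _; simp [ZMod.natCast_val, ZMod.cast_id]
  · intro i _
    congr 1
    simp [← ofAdd_nsmul]

lemma of_mul_sigmaElem [NeZero n] (y : Multiplicative (ZMod n)) :
    of ℤ _ y * sigmaElem n = sigmaElem n := by
  calc of ℤ _ y * sigmaElem n = ∑ x : Multiplicative (ZMod n), of ℤ _ (y * x) := by
        rw [sigmaElem_eq_univ, Finset.mul_sum]; simp [← map_mul]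
    _ = ∑ x : Multiplicative (ZMod n), of ℤ _ x :=
        Fintype.sum_bijective _ (Group.mulLeft_bijective y) _ _ (fun x => rfl)
    _ = sigmaElem n := sigmaElem_eq_univ.symm

lemma sigmaElem_mul_sigmaElem [NeZero n] :
    sigmaElem n * sigmaElem n = (n : ℤ) • sigmaElem n := by
  nth_rewrite 1 [sigmaElem_eq_univ]
  rw [Finset.sum_mul]
  simp only [of_mul_sigmaElem]
  rw [Finset.sum_const]
  simp [← Nat.cast_smul_eq_nsmul ℤ]

lemma pow_sigma_add [NeZero n] (b ε : ℤ) (h : Multiplicative (ZMod n)) (m : ℕ) :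
    ∃ c : ℤ, (b • sigmaElem n + ε • of ℤ _ h) ^ m
        = ε ^ m • of ℤ _ (h ^ m) + c • sigmaElem n
      ∧ (b * n + ε) ^ m = ε ^ m + n * c := by
  induction m with
  | zero => exact ⟨0, by simp [MonoidAlgebra.one_def], by simp⟩
  | succ m ih =>
    obtain ⟨c, hc1, hc2⟩ := ih
    refine ⟨b * ε ^ m + b * c * n + ε * c, ?_, ?_⟩
    · have hr1 := sigmaElem_mul_sigmaElem (n := n)
      rw [zsmul_eq_mul] at hr1
      have hr2 : of ℤ _ h * sigmaElem n = sigmaElem n := of_mul_sigmaElem h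
      have hr2m : of ℤ _ h ^ m * sigmaElem n = sigmaElem n := by
        rw [← map_pow]; exact of_mul_sigmaElem _
      rw [pow_succ, hc1]
      simp only [zsmul_eq_mul, map_pow]
      push_cast
      linear_combination ((c : MonoidAlgebra ℤ (Multiplicative (ZMod n))) * b) * hr1
        + ((b : MonoidAlgebra ℤ (Multiplicative (ZMod n))) * (ε : MonoidAlgebra ℤ (Multiplicative (ZMod n))) ^ m) * hr2m
        + ((ε : MonoidAlgebra ℤ (Multiplicative (ZMod n))) * c) * hr2
    · linear_combination (b * (n : ℤ) + ε) * hc2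

noncomputable abbrev genZ (n : ℕ) : Multiplicative (ZMod n) := Multiplicative.ofAdd (1 : ZMod n)

lemma genZ_pow_n [NeZero n] : genZ n ^ n = 1 := by
  rw [← ofAdd_nsmul]; simp

lemma orderOf_genZ [NeZero n] : orderOf (genZ n) = n := by
  rw [orderOf_ofAdd_eq_addOrderOf, ZMod.addOrderOf_one]

lemma sum_of_pow_mul [NeZero n] (q : ℕ) :
    ∑ i ∈ Finset.range (q * n), of ℤ _ (genZ n ^ i) = (q : ℤ) • sigmaElem n := by
  induction q with
  | zero => simp
  | succ q ih =>
    rw [Nat.succ_mul, Finset.sum_range_add, ih]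
    have : ∀ i, genZ n ^ (q * n + i) = genZ n ^ i := by
      intro i; rw [pow_add, mul_comm q n, pow_mul, genZ_pow_n, one_pow, one_mul]
    simp only [this]
    rw [sigmaElem]
    push_cast
    rw [add_smul, one_smul]

lemma bassElem_genZ [NeZero n] (k m : ℕ) :
    bassElem (genZ n) k m = (∑ i ∈ Finset.range k, of ℤ _ (genZ n ^ i)) ^ m +
      ((1 - (k : ℤ) ^ m) / (n : ℤ)) • sigmaElem n := by
  rw [bassElem, orderOf_genZ]; rfl

lemma sum_of_range_case1 [NeZero n] (k : ℕ) (hk : k % n = 1) :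
    ∑ i ∈ Finset.range k, of ℤ _ (genZ n ^ i)
      = ((k / n : ℕ) : ℤ) • sigmaElem n + (1 : ℤ) • of ℤ _ ((1 : Multiplicative (ZMod n))) := by
  have h2 : k = k / n * n + 1 := by
    conv_lhs => rw [← Nat.div_add_mod k n, hk]
    ring
  conv_lhs => rw [h2]
  rw [Finset.sum_range_add, sum_of_pow_mul]
  simp [mul_comm (k/n) n, pow_mul, genZ_pow_n]

lemma bass_case1 [NeZero n] (k m : ℕ) (hk : k % n = 1) :
    bassElem (genZ n) k m = 1 := by
  obtain ⟨c, hc1, hc2⟩ := pow_sigma_add (n := n) ((k / n : ℕ) : ℤ) 1 1 m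
  rw [bassElem_genZ, sum_of_range_case1 k hk, hc1]
  have hkc : (k : ℤ) = ((k / n : ℕ) : ℤ) * n + 1 := by
    have h2 : k = k / n * n + 1 := by
      conv_lhs => rw [← Nat.div_add_mod k n, hk]
      ring
    exact_mod_cast congrArg (Nat.cast : ℕ → ℤ) h2
  rw [← hkc] at hc2
  have hne : (n : ℤ) ≠ 0 := by exact_mod_cast (NeZero.ne n)
  have hdiv : (1 - (k : ℤ) ^ m) / (n : ℤ) = -c := by
    rw [hc2, one_pow, show (1 : ℤ) - (1 + (n : ℤ) * c) = (-c) * n by ring,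
      Int.mul_ediv_cancel _ hne]
  rw [hdiv, add_assoc, ← add_smul]
  simp [MonoidAlgebra.one_def]


lemma sum_of_range_case2 [NeZero n] (k : ℕ) (hk : k % n = n - 1) (hn2 : 2 ≤ n) :
    ∑ i ∈ Finset.range k, of ℤ _ (genZ n ^ i)
      = ((k / n + 1 : ℕ) : ℤ) • sigmaElem n + (-1 : ℤ) • of ℤ _ (genZ n ^ k) := by
  have h1n : 1 ≤ n := by omega
  have h3 := Nat.div_add_mod k n
  rw [hk] at h3
  have h6 : n * (k / n) + (n - 1) + 1 = k + 1 := by rw [h3]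
  rw [add_assoc, Nat.sub_add_cancel h1n] at h6
  have h2 : k + 1 = (k / n + 1) * n := by
    rw [add_mul, one_mul, mul_comm (k / n) n]; exact h6.symm
  have h4 := sum_of_pow_mul (n := n) (k / n + 1)
  rw [← h2, Finset.sum_range_succ] at h4
  rw [← h4]
  simp

lemma bass_case2 [NeZero n] (k m : ℕ) (hk : k % n = n - 1) (hn2 : 2 ≤ n) (hm : Even m) :
    bassElem (genZ n) k m = of ℤ _ (genZ n ^ (k * m)) := by
  obtain ⟨c, hc1, hc2⟩ := pow_sigma_add (n := n) ((k / n + 1 : ℕ) : ℤ) (-1) (genZ n ^ k) m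
  rw [bassElem_genZ, sum_of_range_case2 k hk hn2, hc1]
  have h1n : 1 ≤ n := by omega
  have h3 := Nat.div_add_mod k n
  rw [hk] at h3
  have h6 : n * (k / n) + (n - 1) + 1 = k + 1 := by rw [h3]
  rw [add_assoc, Nat.sub_add_cancel h1n] at h6
  have h2 : (k / n + 1) * n = k + 1 := by
    rw [add_mul, one_mul, mul_comm (k / n) n]; exact h6
  have hkc : ((k / n + 1 : ℕ) : ℤ) * n + (-1) = (k : ℤ) := by
    calc ((k / n + 1 : ℕ) : ℤ) * n + (-1) = (((k / n + 1) * n : ℕ) : ℤ) - 1 := by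
          push_cast; ring
      _ = (k : ℤ) := by rw [h2]; push_cast; ring
  rw [hkc, hm.neg_one_pow] at hc2
  have hne : (n : ℤ) ≠ 0 := by exact_mod_cast (NeZero.ne n)
  have hdiv : (1 - (k : ℤ) ^ m) / (n : ℤ) = -c := by
    rw [hc2, show (1 : ℤ) - (1 + (n : ℤ) * c) = (-c) * n by ring,
      Int.mul_ediv_cancel _ hne]
  rw [hdiv, hm.neg_one_pow, add_assoc, ← add_smul, ← pow_mul]
  simp

lemma bass_hard [NeZero n] (hn2 : 2 ≤ n) (k m j : ℕ) (hm : 0 < m) (hj : 0 < j)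
    (H : bassElem (genZ n) k m ^ j = 1) :
    (k : ℤ) ≡ 1 [ZMOD (n : ℤ)] ∨ (k : ℤ) ≡ -1 [ZMOD (n : ℤ)] := by
  set θ : ℝ := 2 * Real.pi / n with hθ
  set ζ : ℂ := Complex.exp ((θ : ℂ) * Complex.I) with hζ
  have hζn : ζ ^ n = 1 := zeta_pow_n n hn2
  have hζ1 : ζ ≠ 1 := zeta_ne_one n hn2
  set φ := MonoidAlgebra.lift ℤ ℂ (Multiplicative (ZMod n)) (zmodHom ζ n hζn) with hφ
  have hφof : ∀ i : ℕ, φ (of ℤ _ (genZ n ^ i)) = ζ ^ i := by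
    intro i; rw [hφ, MonoidAlgebra.lift_of]; exact zmodHom_pow ζ n hζn i
  have hσ : φ (sigmaElem n) = 0 := by
    rw [sigmaElem, map_sum]
    simp only [hφof]
    rw [geom_sum_eq hζ1, hζn, sub_self, zero_div]
  have hU : φ (bassElem (genZ n) k m) = (∑ i ∈ Finset.range k, ζ ^ i) ^ m := by
    rw [bassElem_genZ, map_add, map_pow, map_sum]
    simp only [hφof]
    rw [map_smul, hσ, smul_zero, add_zero]
  have hS : (∑ i ∈ Finset.range k, ζ ^ i) ^ (m * j) = 1 := by
    rw [pow_mul, ← hU, ← map_pow, H, map_one]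
  have habs : ‖∑ i ∈ Finset.range k, ζ ^ i‖ = 1 := by
    apply abs_eq_one_of_pow (norm_nonneg _) (Nat.mul_pos hm hj).ne'
    rw [← norm_pow, hS, norm_one]
  have habs2 : ‖ζ ^ k - 1‖ = ‖ζ - 1‖ := by
    rw [← geom_sum_mul ζ k, norm_mul, habs, one_mul]
  have hζk : ζ ^ k = Complex.exp (((k * θ : ℝ) : ℂ) * Complex.I) := by
    rw [hζ, ← Complex.exp_nat_mul]
    congr 1
    push_cast
    ring
  have hcos : Real.cos (k * θ) = Real.cos θ := by
    have e1 := sq_abs_exp_sub_one (k * θ)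
    have e2 := sq_abs_exp_sub_one θ
    rw [← hζk] at e1
    rw [← hζ] at e2
    rw [habs2] at e1
    linarith
  rw [Real.cos_eq_cos_iff] at hcos
  have h1 : (n : ℝ) * θ = 2 * Real.pi := by
    rw [hθ]
    have hn0 : (n : ℝ) ≠ 0 := Nat.cast_ne_zero.2 (by omega)
    field_simp
  have h2π : (2 * Real.pi : ℝ) ≠ 0 := by positivity
  obtain ⟨t, hA | hB⟩ := hcos
  · left
    have h3 : 2 * Real.pi * (1 : ℝ) = 2 * Real.pi * ((t : ℝ) * n + k) := by
      linear_combination (n : ℝ) * hA - (1 - (k : ℝ)) * h1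
    have h5 : (1 : ℤ) = t * n + k := by exact_mod_cast mul_left_cancel₀ h2π h3
    exact (Int.modEq_iff_dvd.2 ⟨-t, by linear_combination -h5⟩).symm
  · right
    have h3 : 2 * Real.pi * (1 : ℝ) = 2 * Real.pi * ((t : ℝ) * n - k) := by
      linear_combination (n : ℝ) * hB - (1 + (k : ℝ)) * h1
    have h5 : (1 : ℤ) = t * n - k := by exact_mod_cast mul_left_cancel₀ h2π h3
    exact (Int.modEq_iff_dvd.2 ⟨t, by linear_combination h5⟩).symm


theorem bassElem_finite_order_iff {G : Type*} [Group G] [Fintype G] (g : G) (k m : ℕ)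
    (hk : 0 < k) (hm : 0 < m) (h : k ^ m ≡ 1 [MOD orderOf g]) :
    (∃ j : ℕ, 0 < j ∧ bassElem g k m ^ j = 1) ↔
      ((k : ℤ) ≡ 1 [ZMOD (orderOf g : ℤ)] ∨ (k : ℤ) ≡ -1 [ZMOD (orderOf g : ℤ)]) := by
  have hnpos : 0 < orderOf g := orderOf_pos g
  haveI : NeZero (orderOf g) := ⟨hnpos.ne'⟩
  by_cases h1 : orderOf g = 1
  · constructor
    · intro _
      left
      rw [Int.ModEq]
      simp [h1]
    · intro _
      refine ⟨1, one_pos, ?_⟩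
      have hg1 : g = 1 := orderOf_eq_one_iff.1 h1
      rw [pow_one, bassElem, hg1, orderOf_one]
      simp only [one_pow, map_one, Finset.sum_const, Finset.card_range, Finset.range_one,
        Finset.sum_singleton, Nat.cast_one, Int.ediv_one, nsmul_eq_mul, mul_one, zsmul_eq_mul,
        Finset.card_singleton]
      push_cast
      abel
  · have hn2 : 2 ≤ orderOf g := by omega
    have hg : g ^ orderOf g = 1 := pow_orderOf_eq_one g
    set ψ := MonoidAlgebra.mapDomainRingHom ℤ (zmodHom g (orderOf g) hg) with hψdef
    have hψof : ∀ i : ℕ,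
        ψ (MonoidAlgebra.of ℤ _ (genZ (orderOf g) ^ i)) = MonoidAlgebra.of ℤ G (g ^ i) := by
      intro i
      rw [hψdef]
      simp only [MonoidAlgebra.mapDomainRingHom_apply, MonoidAlgebra.of_apply,
        AddMonoidHom.toFun_eq_coe, Finsupp.mapDomain.addMonoidHom_apply,
        Finsupp.mapDomain_single, MonoidAlgebra.mapDomain_single, zmodHom_pow]
    have hinj : Function.Injective ψ := by
      intro x y hxy
      apply MonoidAlgebra.mapDomain_injective (zmodHom_injective g hg)
      simpa only [hψdef, MonoidAlgebra.mapDomainRingHom_apply, AddMonoidHom.toFun_eq_coe,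
        Finsupp.mapDomain.addMonoidHom_apply] using hxy
    have htr : ψ (bassElem (genZ (orderOf g)) k m) = bassElem g k m := by
      rw [bassElem_genZ, bassElem, map_add, map_pow, map_sum]
      simp only [hψof]
      rw [map_zsmul]
      congr 1
      rw [sigmaElem, map_sum]
      simp only [hψof]
    constructor
    · rintro ⟨j, hj, hj1⟩
      have hz : bassElem (genZ (orderOf g)) k m ^ j = 1 := by
        apply hinj
        rw [map_pow, htr, hj1, map_one]
      exact bass_hard hn2 k m j hm hj hz
    · rintro (hr | hr)
      · have hk1 : k % orderOf g = 1 := by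
          have h2 := hr.eq
          have h3 : ((k % orderOf g : ℕ) : ℤ) = (k : ℤ) % (orderOf g : ℤ) := by
            exact_mod_cast Int.natCast_mod k (orderOf g)
          have h4 : (1 : ℤ) % (orderOf g : ℤ) = 1 :=
            Int.emod_eq_of_lt one_pos.le (by exact_mod_cast hn2)
          have h9 : ((k % orderOf g : ℕ) : ℤ) = 1 := by rw [h3, h2, h4]
          exact_mod_cast h9
        exact ⟨1, one_pos, by rw [pow_one, ← htr, bass_case1 k m hk1, map_one]⟩
      · by_cases hme : Even m
        · have hk2 : k % orderOf g = orderOf g - 1 := by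
            have h2 := hr.eq
            have h3 : ((k % orderOf g : ℕ) : ℤ) = (k : ℤ) % (orderOf g : ℤ) := by
              exact_mod_cast Int.natCast_mod k (orderOf g)
            have h5 : (-1 : ℤ) % (orderOf g : ℤ) = ((orderOf g : ℤ) - 1) % (orderOf g : ℤ) :=
              Int.ModEq.eq (Int.modEq_iff_dvd.2 ⟨1, by ring⟩)
            have h6 : ((orderOf g : ℤ) - 1) % (orderOf g : ℤ) = (orderOf g : ℤ) - 1 :=
              Int.emod_eq_of_lt (by push_cast; omega) (by omega)
            have h7 : ((k % orderOf g : ℕ) : ℤ) = ((orderOf g - 1 : ℕ) : ℤ) := by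
              rw [h3, h2, h5, h6, Nat.cast_sub hnpos]
              push_cast
              ring
            exact_mod_cast h7
          refine ⟨orderOf g, hnpos, ?_⟩
          rw [← htr, bass_case2 k m hk2 hn2 hme, ← map_pow, ← map_pow, ← pow_mul,
            mul_comm (k * m), pow_mul, genZ_pow_n, one_pow, map_one, map_one]
        · have hmo : Odd m := Nat.odd_iff.2 (Nat.not_even_iff.1 hme)
          have hkm : (k : ℤ) ^ m ≡ 1 [ZMOD (orderOf g : ℤ)] := by
            have := Int.natCast_modEq_iff.2 h
            exact_mod_cast this
          have hkm2 : (k : ℤ) ^ m ≡ -1 [ZMOD (orderOf g : ℤ)] := by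
            have := hr.pow m
            rwa [hmo.neg_one_pow] at this
          have hdvd : (orderOf g : ℤ) ∣ 2 := by
            have hd := (hkm.symm.trans hkm2).dvd
            rw [show (-1 : ℤ) - 1 = -2 by norm_num] at hd
            exact dvd_neg.1 hd
          have hord2 : orderOf g = 2 := by
            have h4 : (orderOf g : ℤ) ≤ 2 := Int.le_of_dvd two_pos hdvd
            omega
          have hk1 : k % orderOf g = 1 := by
            have h2 := hr.eq
            have h3 : ((k % orderOf g : ℕ) : ℤ) = (k : ℤ) % (orderOf g : ℤ) := by
              exact_mod_cast Int.natCast_mod k (orderOf g)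
            rw [hord2] at h2 h3 ⊢
            omega
          exact ⟨1, one_pos, by rw [pow_one, ← htr, bass_case1 k m hk1, map_one]⟩
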